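/- The minimum number of chains into which a finite family of intervals with pairwise distinct endpoints can be partitioned equals the length of the longest 'antichain-ordered' subsequence: namely, the length of the longest increasing subsequence of right endpoints when intervals are listed in order of increasing left endpoints. -/

import Mathlib

open Set

/-- Appending an element larger than all values of a strictly monotone tuple keeps it
strictly monotone. -/
lemma aux_snoc_strictMono {α : Type*} [Preorder α] {k : ℕ} {σ : Fin k → α} {j : α}
    (h : StrictMono σ) (hj : ∀ m, σ m < j) : StrictMono (Fin.snoc σ j) := by
  intro a b hab
  rcases eq_or_ne b (Fin.last k) with rfl | hb
  · obtain ⟨a', rfl⟩ := Fin.exists_castSucc_eq.2 (Fin.ne_last_of_lt hab)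
    simpa using hj a'
  · obtain ⟨b', rfl⟩ := Fin.exists_castSucc_eq.2 hb
    obtain ⟨a', rfl⟩ := Fin.exists_castSucc_eq.2
      (Fin.ne_last_of_lt (lt_of_lt_of_le hab (Fin.castSucc_lt_last b').le))
    simp only [Fin.snoc_castSucc]
    exact h (by exact_mod_cast hab)

/-- The minimum number of chains into which a family of intervals with pairwise distinct
endpoints (listed in order of increasing left endpoints) can be partitioned equals the
length of the longest increasing subsequence of right endpoints. -/
theorem stmt_4 (n : ℕ) (x y : Fin n → ℝ) (hxy : ∀ j, x j < y j)
    (hdist : Function.Injective (Sum.elim x y)) (hsort : StrictMono x) :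
    sInf {c : ℕ | ∃ f : Fin n → Fin c, ∀ i j : Fin n, f i = f j →
        Set.Icc (x i) (y i) ⊆ Set.Icc (x j) (y j) ∨
          Set.Icc (x j) (y j) ⊆ Set.Icc (x i) (y i)}
      = sSup {k : ℕ | ∃ σ : Fin k → Fin n, StrictMono σ ∧ StrictMono (y ∘ σ)} := by
  -- basic facts
  have hyinj : Function.Injective y := by
    intro i j h
    have : Sum.elim x y (Sum.inr i) = Sum.elim x y (Sum.inr j) := by simpa using h
    simpa using hdist this
  have hsub : ∀ i j : Fin n, Set.Icc (x i) (y i) ⊆ Set.Icc (x j) (y j) ↔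
      x j ≤ x i ∧ y i ≤ y j := fun i j => Set.Icc_subset_Icc_iff (hxy i).le
  set A : Set ℕ := {c : ℕ | ∃ f : Fin n → Fin c, ∀ i j : Fin n, f i = f j →
        Set.Icc (x i) (y i) ⊆ Set.Icc (x j) (y j) ∨
          Set.Icc (x j) (y j) ⊆ Set.Icc (x i) (y i)} with hA
  set B : Set ℕ := {k : ℕ | ∃ σ : Fin k → Fin n, StrictMono σ ∧ StrictMono (y ∘ σ)} with hB
  have hB0 : (0 : ℕ) ∈ B := ⟨Fin.elim0, fun a => a.elim0, fun a => a.elim0⟩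
  have hBbdd : ∀ k ∈ B, k ≤ n := by
    rintro k ⟨σ, hσ, -⟩
    simpa using Fintype.card_le_of_injective σ hσ.injective
  have hAne : A.Nonempty :=
    ⟨n, fun i => i, fun i j h => Or.inl (by obtain rfl : i = j := h; exact subset_rfl)⟩
  -- every element of B is ≤ every element of A
  have hBA : ∀ k ∈ B, ∀ c ∈ A, k ≤ c := by
    rintro k ⟨σ, hσ, hyσ⟩ c ⟨f, hf⟩
    have key : ∀ a b, a < b → f (σ a) ≠ f (σ b) := by
      intro a b hlt h
      have h1 : x (σ a) < x (σ b) := hsort (hσ hlt)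
      have h2 : y (σ a) < y (σ b) := hyσ hlt
      rcases hf (σ a) (σ b) h with hs | hs
      · exact absurd ((hsub _ _).1 hs).1 (not_le.2 h1)
      · exact absurd ((hsub _ _).1 hs).2 (not_le.2 h2)
    have : Function.Injective (f ∘ σ) := by
      intro a b h
      rcases lt_trichotomy a b with hlt | heq | hlt
      · exact absurd h (key a b hlt)
      · exact heq
      · exact absurd h.symm (key b a hlt)
    simpa using Fintype.card_le_of_injective _ this
  set L : ℕ := sSup B with hL
  -- key: L ∈ A, via Mirsky's construction
  have hLA : L ∈ A := by
    -- for each i, the set of lengths of increasing runs ending at i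
    set S : Fin n → Set ℕ := fun i =>
      {k | ∃ σ : Fin (k + 1) → Fin n, StrictMono σ ∧ StrictMono (y ∘ σ) ∧
        σ (Fin.last k) = i} with hS
    have hSne : ∀ i, (S i).Nonempty := by
      intro i
      refine ⟨0, fun _ => i, ?_, ?_, rfl⟩ <;>
        exact fun a b h => absurd (Fin.ext (by omega) : a = b) h.ne
    have hSbdd : ∀ i, ∀ k ∈ S i, k ≤ n := by
      rintro i k ⟨σ, hσ, -, -⟩
      have := Fintype.card_le_of_injective σ hσ.injective
      simpa using Nat.le_of_succ_le (by simpa using this)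
    set g : Fin n → ℕ := fun i => sSup (S i) with hg
    have hgmem : ∀ i, g i ∈ S i := fun i => Nat.sSup_mem (hSne i) ⟨n, hSbdd i⟩
    -- g i < L
    have hgL : ∀ i, g i < L := by
      intro i
      obtain ⟨σ, hσ, hyσ, -⟩ := hgmem i
      have : g i + 1 ∈ B := ⟨σ, hσ, hyσ⟩
      have := le_csSup ⟨n, fun k hk => hBbdd k hk⟩ this
      omega
    -- if i < j and y i < y j then g j ≥ g i + 1
    have hstep : ∀ i j : Fin n, i < j → y i < y j → g i + 1 ≤ g j := by
      intro i j hij hy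
      obtain ⟨σ, hσ, hyσ, hlast⟩ := hgmem i
      have h1 : ∀ m, σ m < j := fun m =>
        lt_of_le_of_lt (hlast ▸ hσ.monotone (Fin.le_last m)) hij
      have h2 : ∀ m, y (σ m) < y j := fun m =>
        lt_of_le_of_lt (hlast ▸ hyσ.monotone (Fin.le_last m)) hy
      have hmem : g i + 1 ∈ S j := by
        refine ⟨Fin.snoc σ j, aux_snoc_strictMono hσ h1, ?_, by simp⟩
        have : y ∘ Fin.snoc σ j = Fin.snoc (y ∘ σ) (y j) := by
          funext m
          rcases eq_or_ne m (Fin.last _) with rfl | hm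
          · simp
          · obtain ⟨m', rfl⟩ := Fin.exists_castSucc_eq.2 hm
            simp
        rw [this]
        exact aux_snoc_strictMono hyσ h2
      exact le_csSup ⟨n, hSbdd j⟩ hmem
    -- the chain partition
    refine ⟨fun i => ⟨g i, hgL i⟩, ?_⟩
    intro i j h
    have hgij : g i = g j := by simpa [Fin.ext_iff] using h
    rcases lt_trichotomy i j with hij | rfl | hij
    · right
      rw [hsub]
      refine ⟨(hsort hij).le, ?_⟩
      rcases lt_trichotomy (y j) (y i) with hy | hy | hy
      · exact hy.le
      · exact hy.le
      · exact absurd (hstep i j hij hy) (by omega)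
    · exact Or.inl subset_rfl
    · left
      rw [hsub]
      refine ⟨(hsort hij).le, ?_⟩
      rcases lt_trichotomy (y i) (y j) with hy | hy | hy
      · exact hy.le
      · exact hy.le
      · exact absurd (hstep j i hij hy) (by omega)
  refine le_antisymm (Nat.sInf_le hLA) ?_
  exact csSup_le ⟨0, hB0⟩ fun k hk => le_csInf hAne fun c hc => hBA k hk c hc
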